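/- Let w and m be positive natural numbers with 1 ≤ m ≤ 2^w, and suppose m does not divide 2^w. If J is uniformly distributed on {0, 1, …, 2^w − 1} and Y = 1 + ⌊m·J/2^w⌋, then max_{1 ≤ k ≤ m} P(Y = k) = ⌈2^w/m⌉/2^w and min_{1 ≤ k ≤ m} P(Y = k) = ⌊2^w/m⌋/2^w; in particular both values ⌊2^w/m⌋/2^w and ⌈2^w/m⌉/2^w are attained as P(Y = k) for some k. -/

import Mathlib

open Finset

lemma fmp_filter_eq (N m i : ℕ) (hN : 0 < N) (hm : 0 < m) (hi : i < m) :
    (Finset.range N).filter (fun j => m * j / N = i)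
      = Finset.Ico ((i * N + (m - 1)) / m) (((i + 1) * N + (m - 1)) / m) := by
  have key : ∀ (a j : ℕ), (a + (m - 1)) / m ≤ j ↔ a ≤ m * j := by
    intro a j
    rw [← Nat.not_lt, Nat.lt_iff_add_one_le, Nat.le_div_iff_mul_le hm, add_mul, one_mul,
      mul_comm m j]
    generalize j * m = A
    omega
  ext j
  simp only [Finset.mem_filter, Finset.mem_range, Finset.mem_Ico]
  constructor
  · rintro ⟨hj, rfl⟩
    refine ⟨(key _ _).mpr ((Nat.le_div_iff_mul_le hN).mp le_rfl), ?_⟩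
    rw [← Nat.not_le, key]
    exact Nat.not_le.mpr ((Nat.div_lt_iff_lt_mul hN).mp (Nat.lt_succ_self _))
  · rintro ⟨h1, h2⟩
    have l1 : i * N ≤ m * j := (key _ _).mp h1
    have l2 : m * j < (i + 1) * N := by
      rw [← Nat.not_le, ← key]
      omega
    have hjN : j < N := by
      have h3 : (i + 1) * N ≤ m * N := Nat.mul_le_mul_right N hi
      exact Nat.lt_of_mul_lt_mul_left (lt_of_lt_of_le l2 h3)
    have u1 : i ≤ m * j / N := (Nat.le_div_iff_mul_le hN).mpr l1
    have u2 : m * j / N < i + 1 := (Nat.div_lt_iff_lt_mul hN).mpr l2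
    exact ⟨hjN, Nat.le_antisymm (Nat.lt_succ_iff.mp u2) u1⟩

lemma fmp_card_cases (N m i : ℕ) (hN : 0 < N) (hm : 0 < m) (hi : i < m) :
    ((Finset.range N).filter (fun j => m * j / N = i)).card = N / m ∨
    ((Finset.range N).filter (fun j => m * j / N = i)).card = N / m + 1 := by
  have he : (i + 1) * N + (m - 1) = (i * N + (m - 1)) + N := by
    have : (i + 1) * N = i * N + N := by ring
    omega
  have hval : ((i * N + (m - 1)) + N) / m
      = (i * N + (m - 1)) / m + N / m
        + (if m ≤ (i * N + (m - 1)) % m + N % m then 1 else 0) := Nat.add_div hm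
  rw [fmp_filter_eq N m i hN hm hi, Nat.card_Ico, he, hval]
  generalize (i * N + (m - 1)) / m = g
  generalize N / m = q
  split
  · omega
  · omega

lemma fmp_card_zero (N m : ℕ) (hN : 0 < N) (hm : 0 < m) (hnd : ¬ m ∣ N) :
    ((Finset.range N).filter (fun j => m * j / N = 0)).card = N / m + 1 := by
  have hr : N % m ≠ 0 := fun h => hnd (Nat.dvd_of_mod_eq_zero h)
  rw [fmp_filter_eq N m 0 hN hm hm, Nat.card_Ico]
  have h0 : (0 * N + (m - 1)) / m = 0 := by
    rw [zero_mul, zero_add]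
    exact Nat.div_eq_of_lt (by omega)
  have h1 : ((0 + 1) * N + (m - 1)) / m = N / m + 1 := by
    rw [zero_add, one_mul, Nat.add_div hm, Nat.div_eq_of_lt (show m - 1 < m by omega),
      Nat.mod_eq_of_lt (show m - 1 < m by omega), if_pos (by omega)]
  rw [h0, h1, Nat.sub_zero]

lemma fmp_sum (N m : ℕ) (hN : 0 < N) (hm : 0 < m) :
    ∑ i ∈ Finset.range m, ((Finset.range N).filter (fun j => m * j / N = i)).card = N := by
  conv_rhs => rw [← Finset.card_range N]
  refine (Finset.card_eq_sum_card_fiberwise (fun j hj => Finset.mem_range.mpr ?_)).symm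
  have hjN : j < N := Finset.mem_range.mp hj
  exact (Nat.div_lt_iff_lt_mul hN).mpr (Nat.mul_lt_mul_of_le_of_lt le_rfl hjN hm)

lemma fmp_exists_min (N m : ℕ) (hN : 0 < N) (hm : 0 < m) (hnd : ¬ m ∣ N) :
    ∃ i < m, ((Finset.range N).filter (fun j => m * j / N = i)).card = N / m := by
  by_contra h
  push_neg at h
  have hall : ∀ i ∈ Finset.range m,
      ((Finset.range N).filter (fun j => m * j / N = i)).card = N / m + 1 := by
    intro i hi
    exact (fmp_card_cases N m i hN hm (Finset.mem_range.mp hi)).resolve_left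
      (h i (Finset.mem_range.mp hi))
  have hs := fmp_sum N m hN hm
  rw [Finset.sum_congr rfl hall, Finset.sum_const, Finset.card_range, smul_eq_mul,
    Nat.mul_add, Nat.mul_one] at hs
  have hdm : m * (N / m) + N % m = N := Nat.div_add_mod N m
  have hmod : N % m < m := Nat.mod_lt N hm
  have hr : N % m ≠ 0 := fun h => hnd (Nat.dvd_of_mod_eq_zero h)
  generalize hqd : N / m = q at hs hdm
  generalize hrd : N % m = r at hdm hmod hr
  omega



/-- The probability that the multiply-and-floor method outputs `k`, when `J` is uniformly
distributed on `{0, 1, …, 2^w − 1}` and `Y = 1 + ⌊m·J/2^w⌋`: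
`P(Y = k) = #{j < 2^w | 1 + ⌊m·j/2^w⌋ = k} / 2^w`. -/
def floorMulProb (w m k : ℕ) : ℚ :=
  (((Finset.range (2 ^ w)).filter (fun j => 1 + m * j / 2 ^ w = k)).card : ℚ) / 2 ^ w

/-- if `1 ≤ m ≤ 2^w` and `m` does not divide `2^w`, then
`max_{1 ≤ k ≤ m} P(Y = k) = ⌈2^w/m⌉/2^w`, `min_{1 ≤ k ≤ m} P(Y = k) = ⌊2^w/m⌋/2^w`,
and both values are attained. -/
theorem floorMul_max_min_prob (w m : ℕ) (hw : 0 < w) (hm1 : 1 ≤ m) (hm2 : m ≤ 2 ^ w)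
    (hnd : ¬ m ∣ 2 ^ w) :
    (Finset.Icc 1 m).sup' (Finset.nonempty_Icc.mpr hm1) (floorMulProb w m)
        = (⌈((2 : ℚ) ^ w) / m⌉ : ℚ) / 2 ^ w ∧
      (Finset.Icc 1 m).inf' (Finset.nonempty_Icc.mpr hm1) (floorMulProb w m)
        = (⌊((2 : ℚ) ^ w) / m⌋ : ℚ) / 2 ^ w ∧
      (∃ k ∈ Finset.Icc 1 m, floorMulProb w m k = (⌈((2 : ℚ) ^ w) / m⌉ : ℚ) / 2 ^ w) ∧
      (∃ k ∈ Finset.Icc 1 m, floorMulProb w m k = (⌊((2 : ℚ) ^ w) / m⌋ : ℚ) / 2 ^ w) := by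
  have hN : 0 < 2 ^ w := pow_pos two_pos w
  have hm : 0 < m := hm1
  set q := 2 ^ w / m with hqdef
  have hm' : (0 : ℚ) < (m : ℚ) := by exact_mod_cast hm
  have hN' : (0 : ℚ) < (2 : ℚ) ^ w := by positivity
  have hcast : ((2 : ℚ) ^ w) = ((2 ^ w : ℕ) : ℚ) := by push_cast; ring
  -- probability rewrite
  have hcount : ∀ k ∈ Finset.Icc 1 m, floorMulProb w m k
      = (((Finset.range (2 ^ w)).filter (fun j => m * j / 2 ^ w = k - 1)).card : ℚ) / 2 ^ w := by
    intro k hk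
    obtain ⟨hk1, hk2⟩ := Finset.mem_Icc.mp hk
    unfold floorMulProb
    have hiff : ∀ x : ℕ, (1 + x = k) = (x = k - 1) := fun x => propext (by omega)
    simp only [hiff]
  -- floor and ceil values
  have hdm : m * q + 2 ^ w % m = 2 ^ w := Nat.div_add_mod (2 ^ w) m
  have hmod : 2 ^ w % m < m := Nat.mod_lt _ hm
  have hr : 2 ^ w % m ≠ 0 := fun h => hnd (Nat.dvd_of_mod_eq_zero h)
  have hfq : (⌊((2 : ℚ) ^ w) / m⌋ : ℚ) = (q : ℚ) := by
    rw [hcast, Rat.floor_natCast_div_natCast]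
    norm_cast
  have hcq : (⌈((2 : ℚ) ^ w) / m⌉ : ℚ) = (q : ℚ) + 1 := by
    have : ⌈((2 : ℚ) ^ w) / m⌉ = (q : ℤ) + 1 := by
      rw [hcast, Int.ceil_eq_iff]
      constructor
      · push_cast
        rw [show ((q : ℚ) + 1 - 1) = (q : ℚ) by ring, lt_div_iff₀ hm']
        have : q * m < 2 ^ w := by
          have h2 : q * m = m * q := Nat.mul_comm _ _
          omega
        exact_mod_cast this
      · push_cast
        rw [div_le_iff₀ hm']
        have : 2 ^ w ≤ (q + 1) * m := by
          have h2 : (q + 1) * m = m * q + m := by ring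
          omega
        exact_mod_cast this
    rw [this]
    push_cast
    ring
  -- counts
  have hcases : ∀ k ∈ Finset.Icc 1 m,
      ((Finset.range (2 ^ w)).filter (fun j => m * j / 2 ^ w = k - 1)).card = q ∨
      ((Finset.range (2 ^ w)).filter (fun j => m * j / 2 ^ w = k - 1)).card = q + 1 := by
    intro k hk
    obtain ⟨hk1, hk2⟩ := Finset.mem_Icc.mp hk
    exact fmp_card_cases (2 ^ w) m (k - 1) hN hm (by omega)
  have hmem1 : 1 ∈ Finset.Icc 1 m := Finset.mem_Icc.mpr ⟨le_rfl, hm1⟩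
  have h1max : floorMulProb w m 1 = ((q : ℚ) + 1) / 2 ^ w := by
    rw [hcount 1 hmem1]
    rw [Nat.sub_self]
    rw [fmp_card_zero (2 ^ w) m hN hm hnd, ← hqdef]
    push_cast
    ring
  obtain ⟨i0, hi0m, hi0⟩ := fmp_exists_min (2 ^ w) m hN hm hnd
  have hmemk0 : i0 + 1 ∈ Finset.Icc 1 m := Finset.mem_Icc.mpr ⟨by omega, by omega⟩
  have hk0min : floorMulProb w m (i0 + 1) = (q : ℚ) / 2 ^ w := by
    rw [hcount _ hmemk0]
    simp only [Nat.add_sub_cancel]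
    rw [hi0]
  -- bounds
  have hub : ∀ k ∈ Finset.Icc 1 m, floorMulProb w m k ≤ ((q : ℚ) + 1) / 2 ^ w := by
    intro k hk
    rw [hcount k hk]
    have hle : ((((Finset.range (2 ^ w)).filter (fun j => m * j / 2 ^ w = k - 1)).card : ℕ) : ℚ)
        ≤ (q : ℚ) + 1 := by
      rcases hcases k hk with h | h <;> rw [h] <;> push_cast <;> linarith
    gcongr
  have hlb : ∀ k ∈ Finset.Icc 1 m, (q : ℚ) / 2 ^ w ≤ floorMulProb w m k := by
    intro k hk
    rw [hcount k hk]
    have hle : (q : ℚ)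
        ≤ ((((Finset.range (2 ^ w)).filter (fun j => m * j / 2 ^ w = k - 1)).card : ℕ) : ℚ) := by
      rcases hcases k hk with h | h <;> rw [h] <;> push_cast <;> linarith
    gcongr
  refine ⟨?_, ?_, ?_, ?_⟩
  · rw [hcq]
    refine le_antisymm (Finset.sup'_le _ _ hub) ?_
    rw [← h1max]
    exact Finset.le_sup' _ hmem1
  · rw [hfq]
    refine le_antisymm ?_ (Finset.le_inf' _ _ hlb)
    rw [← hk0min]
    exact Finset.inf'_le _ hmemk0
  · exact ⟨1, hmem1, by rw [h1max, hcq]⟩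
  · exact ⟨i0 + 1, hmemk0, by rw [hk0min, hfq]⟩
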